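/- Let T : C[0,1] → C[0,1] be a positive linear operator with T(e₀) = e₀ and T(e₁) ≥ e₁ (pointwise on [0,1]), and let g ∈ C[0,1] be twice continuously differentiable on [0,1]. Then for all m, p ∈ ℕ and all x ∈ [0,1] one has |T^{m+p}(g;x) − T^m(g;x)| ≤ (1/2)·‖g''‖·|T^{m+p}(e₂;x) − T^m(e₂;x)| + ‖g'‖·|T^m(e₁;x) − T^{m+p}(e₁;x)|, where ‖g'‖ and ‖g''‖ denote the sup norms of the first and second derivatives of g on [0,1]. -/

import Mathlib

open Filter

noncomputable section

/-- The unit interval `[0,1]` as a subset of `ℝ`. -/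
abbrev I01 : Set ℝ := Set.Icc 0 1

/-- The space `C[0,1]` of continuous real-valued functions on `[0,1]`. -/
abbrev CI := C(I01, ℝ)

/-- The monomial `e i : x ↦ x ^ i`. -/
def e (i : ℕ) : CI := ⟨fun x => (x : ℝ) ^ i, (continuous_subtype_val).pow i⟩

/-- A linear operator on `C[0,1]` is positive if it maps nonnegative functions to
nonnegative functions. -/
def IsPositive (T : CI →ₗ[ℝ] CI) : Prop :=
  ∀ f : CI, (∀ x, 0 ≤ f x) → ∀ x, 0 ≤ T f x

/-- The `m`-th iterate of `T`. -/
def iter (T : CI →ₗ[ℝ] CI) : ℕ → (CI →ₗ[ℝ] CI)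
  | 0 => LinearMap.id
  | m + 1 => T ∘ₗ iter T m

/-- The sup norm `sup {|h x| : x ∈ [0,1]}` of a function on `[0,1]`. -/
def supAbsOn (h : ℝ → ℝ) : ℝ := sSup ((fun x => |h x|) '' I01)

/- ### Auxiliary lemmas -/

lemma supAbsOn_bound {h : ℝ → ℝ} (hh : ContinuousOn h I01) :
    ∀ x ∈ I01, |h x| ≤ supAbsOn h := by
  intro x hx
  have hbdd : BddAbove ((fun x => |h x|) '' I01) :=
    (isCompact_Icc.image_of_continuousOn hh.abs).bddAbove
  exact le_csSup hbdd ⟨x, hx, rfl⟩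

lemma supAbsOn_nonneg {h : ℝ → ℝ} (hh : ContinuousOn h I01) : 0 ≤ supAbsOn h :=
  le_trans (abs_nonneg (h 0)) (supAbsOn_bound hh 0 ⟨le_rfl, zero_le_one⟩)

lemma taylor_one_sided (g g' g'' : ℝ → ℝ) (M : ℝ)
    (hd1 : ∀ x ∈ I01, HasDerivWithinAt g (g' x) I01 x)
    (hd2 : ∀ x ∈ I01, HasDerivWithinAt g' (g'' x) I01 x)
    (hM : ∀ x ∈ I01, |g'' x| ≤ M) :
    ∀ s ∈ I01, ∀ t ∈ I01, g t - g s - g' s * (t - s) ≤ M / 2 * (t - s) ^ 2 := by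
  have lip : ∀ a ∈ I01, ∀ b ∈ I01, |g' b - g' a| ≤ M * |b - a| := by
    intro a ha b hb
    have := (convex_Icc (0:ℝ) 1).norm_image_sub_le_of_norm_hasDerivWithin_le hd2
      (fun y hy => by simpa [Real.norm_eq_abs] using hM y hy) ha hb
    simpa [Real.norm_eq_abs] using this
  intro s hs t ht
  set k : ℝ → ℝ := fun r => M / 2 * (r - s) ^ 2 - (g r - g s - g' s * (r - s)) with hk
  have hg_cont : ContinuousOn g I01 := fun y hy => (hd1 y hy).continuousWithinAt
  have hk_cont : ContinuousOn k I01 := by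
    apply ContinuousOn.sub
    · exact continuousOn_const.mul ((continuousOn_id.sub continuousOn_const).pow 2)
    · exact (hg_cont.sub continuousOn_const).sub
        (continuousOn_const.mul (continuousOn_id.sub continuousOn_const))
  have hderiv : ∀ x ∈ Set.Ioo (0:ℝ) 1,
      HasDerivAt k (M * (x - s) - (g' x - g' s)) x := by
    intro x hx
    have hx' : x ∈ I01 := ⟨hx.1.le, hx.2.le⟩
    have hgx : HasDerivAt g (g' x) x :=
      (hd1 x hx').hasDerivAt (Icc_mem_nhds hx.1 hx.2)
    have hsq : HasDerivAt (fun r : ℝ => (r - s) ^ 2) (2 * (x - s) ^ 1 * 1) x :=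
      ((hasDerivAt_id x).sub_const s).pow 2
    have h1 : HasDerivAt (fun r => M / 2 * (r - s) ^ 2) (M / 2 * (2 * (x - s) ^ 1 * 1)) x :=
      hsq.const_mul (M / 2)
    have h2 : HasDerivAt (fun r => g r - g s - g' s * (r - s))
        (g' x - g' s * 1) x :=
      (hgx.sub_const (g s)).sub (((hasDerivAt_id x).sub_const s).const_mul (g' s))
    have := h1.sub h2
    convert this using 1
    all_goals first | rfl | ring
  have hkt : 0 ≤ k t := by
    rcases le_total s t with hst | hts
    · have hsub : Set.Icc s 1 ⊆ I01 := Set.Icc_subset_Icc hs.1 le_rfl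
      have mono : MonotoneOn k (Set.Icc s 1) := by
        apply monotoneOn_of_hasDerivWithinAt_nonneg (convex_Icc s 1) (hk_cont.mono hsub)
          (f' := fun x => M * (x - s) - (g' x - g' s))
        · intro x hx
          rw [interior_Icc] at hx
          exact (hderiv x ⟨lt_of_le_of_lt hs.1 hx.1, hx.2⟩).hasDerivWithinAt
        · intro x hx
          rw [interior_Icc] at hx
          have hx' : x ∈ I01 := ⟨le_trans hs.1 hx.1.le, hx.2.le⟩
          have hl := lip s hs x hx'
          rw [abs_of_nonneg (by linarith [hx.1.le] : (0:ℝ) ≤ x - s)] at hl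
          have := le_abs_self (g' x - g' s)
          linarith
      have h0 : k s = 0 := by simp [hk]
      have := mono ⟨le_rfl, hs.2⟩ ⟨hst, ht.2⟩ hst
      linarith
    · have hsub : Set.Icc (0:ℝ) s ⊆ I01 := Set.Icc_subset_Icc le_rfl hs.2
      have anti : AntitoneOn k (Set.Icc (0:ℝ) s) := by
        apply antitoneOn_of_hasDerivWithinAt_nonpos (convex_Icc 0 s) (hk_cont.mono hsub)
          (f' := fun x => M * (x - s) - (g' x - g' s))
        · intro x hx
          rw [interior_Icc] at hx
          exact (hderiv x ⟨hx.1, lt_of_lt_of_le hx.2 hs.2⟩).hasDerivWithinAt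
        · intro x hx
          rw [interior_Icc] at hx
          have hx' : x ∈ I01 := ⟨hx.1.le, le_trans hx.2.le hs.2⟩
          have hl := lip s hs x hx'
          rw [abs_of_nonpos (by linarith [hx.2.le] : x - s ≤ (0:ℝ))] at hl
          have := neg_abs_le (g' x - g' s)
          linarith
      have h0 : k s = 0 := by simp [hk]
      have := anti ⟨ht.1, hts⟩ ⟨hs.1, le_rfl⟩ hts
      linarith
  have hkt' : 0 ≤ M / 2 * (t - s) ^ 2 - (g t - g s - g' s * (t - s)) := hkt
  linarith

lemma iter_pos (T : CI →ₗ[ℝ] CI) (hpos : IsPositive T) :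
    ∀ m, IsPositive (iter T m) := by
  intro m
  induction m with
  | zero => intro f hf x; simpa [iter] using hf x
  | succ m ih =>
      intro f hf
      have := hpos (iter T m f) (ih f hf)
      simpa [iter] using this

lemma pos_mono (L : CI →ₗ[ℝ] CI) (hL : IsPositive L) (f h : CI)
    (hfh : ∀ x, f x ≤ h x) : ∀ x, L f x ≤ L h x := by
  intro x
  have := hL (h - f) (fun y => by
    simpa [ContinuousMap.sub_apply, sub_nonneg] using hfh y) x
  rw [map_sub] at this
  simpa [ContinuousMap.sub_apply, sub_nonneg] using this

lemma le_iter (T : CI →ₗ[ℝ] CI) (hpos : IsPositive T) (f : CI)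
    (hf : ∀ x, f x ≤ T f x) : ∀ p x, f x ≤ iter T p f x := by
  intro p
  induction p with
  | zero => intro x; simp [iter]
  | succ p ih =>
      intro x
      have h2 : T f x ≤ T (iter T p f) x := pos_mono T hpos f _ ih x
      have h3 : iter T (p + 1) f x = T (iter T p f) x := by simp [iter]
      rw [h3]
      exact le_trans (hf x) h2

lemma iter_add (T : CI →ₗ[ℝ] CI) (m p : ℕ) (f : CI) :
    iter T (m + p) f = iter T m (iter T p f) := by
  induction m with
  | zero => simp [iter, Nat.zero_add]
  | succ m ih =>
      rw [Nat.succ_add]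
      simp [iter, ih]

/-- Key step: if a function dominates its tangent lines (with nonnegative slopes),
then `u ≤ T u` pointwise. -/
lemma self_le_T (T : CI →ₗ[ℝ] CI) (hpos : IsPositive T)
    (h0 : T (e 0) = e 0) (h1 : ∀ x : I01, e 1 x ≤ T (e 1) x)
    (u : CI) (uq : ℝ → ℝ)
    (hd : ∀ s : I01, 0 ≤ uq s)
    (htan : ∀ s t : I01, 0 ≤ u t - u s - uq s * ((t : ℝ) - (s : ℝ))) :
    ∀ s : I01, u s ≤ T u s := by
  intro s
  set d : ℝ := uq s with hdd
  set F : CI := u - (u s) • e 0 - d • (e 1 - ((s : ℝ)) • e 0) with hF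
  have hFpos : ∀ t : I01, 0 ≤ F t := by
    intro t
    have hcalc : F t = u t - u s - d * ((t : ℝ) - (s : ℝ)) := by
      simp only [hF, e, ContinuousMap.sub_apply, ContinuousMap.smul_apply, smul_eq_mul,
        ContinuousMap.coe_mk, pow_zero, pow_one]
      ring
    rw [hcalc]
    exact htan s t
  have hTF := hpos F hFpos s
  rw [hF, map_sub, map_sub, map_smul, map_smul, map_sub, map_smul, h0] at hTF
  simp only [ContinuousMap.sub_apply, ContinuousMap.smul_apply, smul_eq_mul] at hTF
  have he0 : (e 0) s = 1 := by simp [e]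
  have he1 : (e 1) s = (s : ℝ) := by simp [e]
  rw [he0] at hTF
  have h1s : (s : ℝ) ≤ T (e 1) s := by rw [← he1]; exact h1 s
  have hds : 0 ≤ d := hd s
  nlinarith [mul_nonneg hds (sub_nonneg.2 h1s)]

theorem stmt13 (T : CI →ₗ[ℝ] CI) (hpos : IsPositive T)
    (h0 : T (e 0) = e 0) (h1 : ∀ x : I01, e 1 x ≤ T (e 1) x)
    (g g' g'' : ℝ → ℝ) (G : CI) (hGg : ∀ x : I01, G x = g x)
    (hd1 : ∀ x ∈ I01, HasDerivWithinAt g (g' x) I01 x)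
    (hd2 : ∀ x ∈ I01, HasDerivWithinAt g' (g'' x) I01 x)
    (hc : ContinuousOn g'' I01) :
    ∀ m p : ℕ, ∀ x : I01,
      |iter T (m + p) G x - iter T m G x| ≤
        (1 / 2) * supAbsOn g'' * |iter T (m + p) (e 2) x - iter T m (e 2) x|
        + supAbsOn g' * |iter T m (e 1) x - iter T (m + p) (e 1) x| := by
  intro m p x
  set Mv := supAbsOn g'' with hMv
  set Nv := supAbsOn g' with hNv
  have hg'c : ContinuousOn g' I01 := fun y hy => (hd2 y hy).continuousWithinAt
  have hM : ∀ y ∈ I01, |g'' y| ≤ Mv := supAbsOn_bound hc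
  have hN : ∀ y ∈ I01, |g' y| ≤ Nv := supAbsOn_bound hg'c
  have hMnn : 0 ≤ Mv := supAbsOn_nonneg hc
  have key₁ := taylor_one_sided g g' g'' Mv hd1 hd2 hM
  have key₂ : ∀ s ∈ I01, ∀ t ∈ I01,
      -(g t - g s - g' s * (t - s)) ≤ Mv / 2 * (t - s) ^ 2 := by
    intro s hs t ht
    have := taylor_one_sided (fun r => -g r) (fun r => -g' r) (fun r => -g'' r) Mv
      (fun y hy => (hd1 y hy).neg) (fun y hy => (hd2 y hy).neg)
      (fun y hy => by simpa using hM y hy) s hs t ht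
    linarith [this]
  -- the two auxiliary functions
  set u : CI := (Mv / 2) • e 2 + Nv • e 1 - G with hu
  set v : CI := (Mv / 2) • e 2 + Nv • e 1 + G with hv
  have hue : ∀ t : I01, u t = Mv / 2 * (t : ℝ) ^ 2 + Nv * (t : ℝ) - g t := by
    intro t
    simp only [hu, e, ContinuousMap.sub_apply, ContinuousMap.add_apply,
      ContinuousMap.smul_apply, smul_eq_mul, ContinuousMap.coe_mk, pow_one, hGg t]
  have hve : ∀ t : I01, v t = Mv / 2 * (t : ℝ) ^ 2 + Nv * (t : ℝ) + g t := by
    intro t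
    simp only [hv, e, ContinuousMap.sub_apply, ContinuousMap.add_apply,
      ContinuousMap.smul_apply, smul_eq_mul, ContinuousMap.coe_mk, pow_one, hGg t]
  -- u ≤ T u
  have hTu : ∀ s : I01, u s ≤ T u s := by
    apply self_le_T T hpos h0 h1 u (fun r => Mv * r + Nv - g' r)
    · intro s
      show (0:ℝ) ≤ Mv * (s : ℝ) + Nv - g' (s : ℝ)
      have hMs : 0 ≤ Mv * (s : ℝ) := mul_nonneg hMnn s.2.1
      linarith [le_abs_self (g' (s : ℝ)), hN (s : ℝ) s.2]
    · intro s t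
      have hkey := key₁ (s : ℝ) s.2 (t : ℝ) t.2
      rw [hue t, hue s]
      nlinarith [hkey]
  -- v ≤ T v
  have hTv : ∀ s : I01, v s ≤ T v s := by
    apply self_le_T T hpos h0 h1 v (fun r => Mv * r + Nv + g' r)
    · intro s
      show (0:ℝ) ≤ Mv * (s : ℝ) + Nv + g' (s : ℝ)
      have hMs : 0 ≤ Mv * (s : ℝ) := mul_nonneg hMnn s.2.1
      linarith [neg_abs_le (g' (s : ℝ)), hN (s : ℝ) s.2]
    · intro s t
      have hkey := key₂ (s : ℝ) s.2 (t : ℝ) t.2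
      rw [hve t, hve s]
      nlinarith [hkey]
  -- e 2 ≤ T (e 2)
  have hTe2 : ∀ s : I01, e 2 s ≤ T (e 2) s := by
    apply self_le_T T hpos h0 h1 (e 2) (fun r => 2 * r)
    · intro s
      show (0:ℝ) ≤ 2 * (s : ℝ)
      linarith [s.2.1]
    · intro s t
      have h2t : (e 2) t = (t : ℝ) ^ 2 := by simp [e]
      have h2s : (e 2) s = (s : ℝ) ^ 2 := by simp [e]
      rw [h2t, h2s]
      nlinarith [sq_nonneg ((t : ℝ) - (s : ℝ))]
  -- iterated comparisons
  have mono_iter : ∀ (f : CI), (∀ y, f y ≤ T f y) →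
      ∀ y, iter T m f y ≤ iter T (m + p) f y := by
    intro f hf y
    rw [iter_add]
    exact pos_mono _ (iter_pos T hpos m) _ _ (le_iter T hpos f hf p) y
  have hi1 : iter T m (e 1) x ≤ iter T (m + p) (e 1) x := mono_iter (e 1) h1 x
  have hi2 : iter T m (e 2) x ≤ iter T (m + p) (e 2) x := mono_iter (e 2) hTe2 x
  have hiu : iter T m u x ≤ iter T (m + p) u x := mono_iter u hTu x
  have hiv : iter T m v x ≤ iter T (m + p) v x := mono_iter v hTv x
  -- expand the iterates of u and v
  have expandu : ∀ k : ℕ, iter T k u x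
      = Mv / 2 * iter T k (e 2) x + Nv * iter T k (e 1) x - iter T k G x := by
    intro k
    rw [hu]
    simp [map_add, map_sub, map_smul, ContinuousMap.add_apply,
      ContinuousMap.sub_apply, ContinuousMap.smul_apply, smul_eq_mul]
  have expandv : ∀ k : ℕ, iter T k v x
      = Mv / 2 * iter T k (e 2) x + Nv * iter T k (e 1) x + iter T k G x := by
    intro k
    rw [hv]
    simp [map_add, map_sub, map_smul, ContinuousMap.add_apply,
      ContinuousMap.sub_apply, ContinuousMap.smul_apply, smul_eq_mul]
  rw [expandu m, expandu (m + p)] at hiu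
  rw [expandv m, expandv (m + p)] at hiv
  have habs2 : |iter T (m + p) (e 2) x - iter T m (e 2) x|
      = iter T (m + p) (e 2) x - iter T m (e 2) x :=
    abs_of_nonneg (sub_nonneg.2 hi2)
  have habs1 : |iter T m (e 1) x - iter T (m + p) (e 1) x|
      = iter T (m + p) (e 1) x - iter T m (e 1) x := by
    rw [abs_sub_comm]
    exact abs_of_nonneg (sub_nonneg.2 hi1)
  rw [habs2, habs1, abs_le]
  constructor <;> linarith
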